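/- Let G be a pentagraph, let v be a vertex of G, let X be a set of neighbours of v, and let A1 and A2 be distinct components of G∖(X ∪ {v}). Let x and x' be distinct vertices of X, and suppose there is an induced path of G between x and x' of even length all of whose internal vertices lie in A1. Then every induced path of G between x and x' all of whose internal vertices lie in A2 and whose interior is nonempty has even length, and its length is at least four. -/

import Mathlib

open SimpleGraph

variable {V : Type*}

/-- A walk is an *induced (chordless) path* if it is a path and every edge of `G` joining
two of its vertices is an edge of the path. -/
def IsIndPath (G : SimpleGraph V) {u v : V} (p : G.Walk u v) : Prop :=
  p.IsPath ∧ ∀ x ∈ p.support, ∀ y ∈ p.support, G.Adj x y → s(x, y) ∈ p.edges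

/-- The interior (set of internal vertices) of a walk from `u` to `v`. -/
def interiorSet {G : SimpleGraph V} {u v : V} (p : G.Walk u v) : Set V :=
  {x | x ∈ p.support ∧ x ≠ u ∧ x ≠ v}

/-- An *induced cycle*: a cycle such that every edge of `G` joining two of its vertices is an
edge of the cycle. -/
def IsIndCycle (G : SimpleGraph V) {u : V} (c : G.Walk u u) : Prop :=
  c.IsCycle ∧ ∀ x ∈ c.support, ∀ y ∈ c.support, G.Adj x y → s(x, y) ∈ c.edges

/-- A *pentagraph*: every cycle has length at least five, and every induced cycle of odd
length has length exactly five. -/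
def IsPentagraph (G : SimpleGraph V) : Prop :=
  (∀ (u : V) (c : G.Walk u u), c.IsCycle → 5 ≤ c.length) ∧
  (∀ (u : V) (c : G.Walk u u), IsIndCycle G c → Odd c.length → c.length = 5)

/-- Removing the vertex set `X` disconnects `G`: two vertices outside `X` are not joined by
any path avoiding `X`. -/
def RemovalDisconnects (G : SimpleGraph V) (X : Set V) : Prop :=
  ∃ a b : ↥(Xᶜ), ¬ (G.induce Xᶜ).Reachable a b

/-- `G` admits a `P₃`-cutset: an induced three-vertex path whose deletion disconnects `G`. -/
def HasP3Cutset (G : SimpleGraph V) : Prop :=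
  ∃ v₁ v₂ v₃ : V, G.Adj v₁ v₂ ∧ G.Adj v₂ v₃ ∧ ¬ G.Adj v₁ v₃ ∧ v₁ ≠ v₃ ∧
    RemovalDisconnects G ({v₁, v₂, v₃} : Set V)

/-- `A` is (the vertex set of) a connected component of `G ∖ X`. -/
def IsCompOf (G : SimpleGraph V) (X : Set V) (A : Set V) : Prop :=
  A.Nonempty ∧ A ⊆ Xᶜ ∧ (G.induce A).Connected ∧
    ∀ u ∈ A, ∀ w ∈ Xᶜ, G.Adj u w → w ∈ A

/-- `G` admits a strong parity star-cutset. -/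
def HasStrongParityStarCutset (G : SimpleGraph V) : Prop :=
  ∃ X : Set V, RemovalDisconnects G X ∧
    ∃ x ∈ X, (∀ y ∈ X, y ≠ x → G.Adj x y) ∧
      ∃ A : Set V, IsCompOf G X A ∧
        (∀ y ∈ X, y ≠ x → ∀ z ∈ X, z ≠ x → y ≠ z →
          ∃ p : G.Walk y z, IsIndPath G p ∧ Even p.length ∧ interiorSet p ⊆ A) ∧
        (∃ a ∈ A, G.Adj x a)

/-- `G` admits a clique cutset. -/
def HasCliqueCutset (G : SimpleGraph V) : Prop :=
  ∃ X : Set V, G.IsClique X ∧ RemovalDisconnects G X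

/-- Vertices of the Petersen graph: 2-element subsets of a 5-element set. -/
abbrev KVert : Type := {s : Finset (Fin 5) // s.card = 2}

/-- The Petersen graph, as the Kneser graph on 2-element subsets of a 5-element set. -/
def petersen : SimpleGraph KVert where
  Adj a b := Disjoint (a : Finset (Fin 5)) (b : Finset (Fin 5))
  symm := ⟨fun a b h => h.symm⟩
  loopless := ⟨by
    intro a (h : Disjoint (a : Finset (Fin 5)) (a : Finset (Fin 5)))
    rw [disjoint_self] at h
    have h2 := a.2
    simp [h] at h2⟩

def pA : KVert := ⟨{0, 1}, by decide⟩
def pB : KVert := ⟨{2, 3}, by decide⟩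

/-- The Petersen graph minus one edge. -/
def petersen0 : SimpleGraph KVert := petersen.deleteEdges {s(pA, pB)}

/-- The Petersen graph minus one vertex. -/
def petersen1 : SimpleGraph {x : KVert // x ≠ pA} := petersen.induce {x : KVert | x ≠ pA}

/-- The Petersen graph minus two adjacent vertices. -/
def petersen2 : SimpleGraph {x : KVert // x ≠ pA ∧ x ≠ pB} :=
  petersen.induce {x : KVert | x ≠ pA ∧ x ≠ pB}

/-- Two nonadjacent vertices are *linked*: joined by two induced paths, both of length at
least three, of different parity. -/
def Linked (H : SimpleGraph V) (s t : V) : Prop :=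
  ∃ (p q : H.Walk s t), IsIndPath H p ∧ IsIndPath H q ∧
    3 ≤ p.length ∧ 3 ≤ q.length ∧ p.length % 2 ≠ q.length % 2

/-- Two vertices are *odd-linked*: joined by an induced path of odd length at least five. -/
def OddLinked (H : SimpleGraph V) (s t : V) : Prop :=
  ∃ p : H.Walk s t, IsIndPath H p ∧ Odd p.length ∧ 5 ≤ p.length

/-- A *jump* over a hole with vertex set `C`: an induced path whose ends are distinct,
nonadjacent vertices of `C` and whose other vertices avoid `C`. -/
def IsJump (G : SimpleGraph V) (C : Set V) {s t : V} (P : G.Walk s t) : Prop :=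
  IsIndPath G P ∧ s ∈ C ∧ t ∈ C ∧ s ≠ t ∧ ¬ G.Adj s t ∧
    ∀ x ∈ P.support, x ∈ C → x = s ∨ x = t

/-- A jump *across* the vertex `c` of `C`. -/
def IsJumpAcross (G : SimpleGraph V) (C : Set V) {s t : V} (P : G.Walk s t) (c : V) : Prop :=
  IsJump G C P ∧ c ∈ C ∧ G.Adj c s ∧ G.Adj c t

/-- A *local* jump: no vertex of `C` other than `c, s, t` has a neighbour in the interior. -/
def IsLocalJump (G : SimpleGraph V) (C : Set V) {s t : V} (P : G.Walk s t) : Prop :=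
  IsJump G C P ∧ ∃ c : V, c ∈ C ∧ G.Adj c s ∧ G.Adj c t ∧
    ∀ x ∈ C, x ≠ c → x ≠ s → x ≠ t → ∀ y ∈ interiorSet P, ¬ G.Adj x y

/-- A *short* jump: a jump of length three. -/
def IsShortJump (G : SimpleGraph V) (C : Set V) {s t : V} (P : G.Walk s t) : Prop :=
  IsJump G C P ∧ P.length = 3

/-- `G` is three-connected. -/
def ThreeConnected (G : SimpleGraph V) : Prop :=
  4 ≤ Nat.card V ∧ ∀ S : Set V, S.ncard < 3 → (G.induce Sᶜ).Connected


section Helpers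

variable {G : SimpleGraph V}

lemma comp_mono {X A₁ A₂ : Set V} (h₁ : IsCompOf G X A₁)
    (h₂ : IsCompOf G X A₂) {w : V} (hw₁ : w ∈ A₁) (hw₂ : w ∈ A₂) : A₁ ⊆ A₂ := by
  intro u hu
  have key : ∀ (a b : ↥A₁) (wk : (G.induce A₁).Walk a b), (a : V) ∈ A₂ → (b : V) ∈ A₂ := by
    intro a b wk
    induction wk with
    | nil => exact id
    | cons h wk ih =>
      rename_i a' c _
      intro ha
      refine ih (h₂.2.2.2 _ ha _ ?_ ?_)
      · exact h₁.2.1 c.2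
      · exact h
  obtain ⟨wk⟩ := h₁.2.2.1.preconnected ⟨w, hw₁⟩ ⟨u, hu⟩
  exact key _ _ wk hw₂

lemma comp_disj {X A₁ A₂ : Set V} (h₁ : IsCompOf G X A₁)
    (h₂ : IsCompOf G X A₂) (hA : A₁ ≠ A₂) {w : V} (hw₁ : w ∈ A₁) (hw₂ : w ∈ A₂) : False :=
  hA (Set.Subset.antisymm (comp_mono h₁ h₂ hw₁ hw₂) (comp_mono h₂ h₁ hw₂ hw₁))

lemma support_of_short {x x' : V} (r : G.Walk x x') (h : r.length ≤ 1) :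
    ∀ w ∈ r.support, w = x ∨ w = x' := by
  cases r with
  | nil => simp
  | cons h1 r' =>
    cases r' with
    | nil => intro w hw; simpa using hw
    | cons h2 r'' => simp [SimpleGraph.Walk.length_cons] at h

lemma no_len_two (hG : IsPentagraph G) (v : V) (X : Set V) (hX : ∀ x ∈ X, G.Adj v x)
    (A : Set V) (hA : IsCompOf G (X ∪ {v}) A)
    {x x' : V} (hx : x ∈ X) (hx' : x' ∈ X)
    (r : G.Walk x x') (hr : r.IsPath) (hrint : interiorSet r ⊆ A) (h2 : r.length = 2) :
    False := by
  cases r with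
  | nil => simp at h2
  | cons h1 r' =>
    cases r' with
    | nil => simp at h2
    | cons hadj2 r'' =>
      cases r'' with
      | nil =>
        rename_i w
        -- w is the middle vertex
        have hwsup : w ∈ (SimpleGraph.Walk.cons h1 (SimpleGraph.Walk.cons hadj2 .nil)).support := by
          simp
        have hwx : w ≠ x := h1.ne'
        have hwx' : w ≠ x' := hadj2.ne
        have hwA : w ∈ A := hrint ⟨hwsup, hwx, hwx'⟩
        have hwX : w ∉ X ∪ {v} := hA.2.1 hwA
        have hwv : w ≠ v := by intro h; exact hwX (by simp [h])
        have hwXX : w ∉ X := fun h => hwX (Or.inl h)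
        have hvx : G.Adj v x := hX x hx
        have hvx' : G.Adj v x' := hX x' hx'
        have hxx' : x ≠ x' := by
          rw [SimpleGraph.Walk.isPath_def] at hr
          simp at hr
          tauto
        have h5 := hG.1 v
          (.cons hvx (.cons h1 (.cons hadj2 (.cons hvx'.symm .nil)))) ?_
        · simp at h5
        · rw [SimpleGraph.Walk.isCycle_def]
          refine ⟨?_, by simp, ?_⟩
          · rw [SimpleGraph.Walk.isTrail_def]
            simp [Sym2.eq, Sym2.rel_iff', hvx.ne, hvx.ne', h1.ne, h1.ne', hadj2.ne,
              hadj2.ne', hvx'.ne, hvx'.ne', hxx', hxx'.symm, hwv, Ne.symm hwv]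
          · simp [hvx.ne, hvx.ne', h1.ne, h1.ne', hadj2.ne, hadj2.ne', hvx'.ne, hvx'.ne',
              hxx', hxx'.symm, hwv, Ne.symm hwv]
      | cons _ _ => simp [SimpleGraph.Walk.length_cons] at h2

end Helpers

/-- parity of induced paths between two vertices of `X` through different
components of `G ∖ (X ∪ {v})` in a pentagraph. -/
theorem pentagraph_component_path_parity {V : Type*} [Fintype V] (G : SimpleGraph V)
    (hG : IsPentagraph G) (v : V) (X : Set V) (hX : ∀ x ∈ X, G.Adj v x)
    (A₁ A₂ : Set V) (hA₁ : IsCompOf G (X ∪ {v}) A₁) (hA₂ : IsCompOf G (X ∪ {v}) A₂)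
    (hA : A₁ ≠ A₂)
    (x x' : V) (hx : x ∈ X) (hx' : x' ∈ X) (hxx' : x ≠ x')
    (p : G.Walk x x') (hp : IsIndPath G p) (hpeven : Even p.length)
    (hpint : interiorSet p ⊆ A₁) :
    ∀ q : G.Walk x x', IsIndPath G q → interiorSet q ⊆ A₂ → (interiorSet q).Nonempty →
      Even q.length ∧ 4 ≤ q.length := by
  intro q hq hqA hqne
  classical
  have hvx : G.Adj v x := hX x hx
  have hvx' : G.Adj v x' := hX x' hx'
  have hnadj : ¬ G.Adj x x' := by
    intro h
    have h5 := hG.1 v (.cons hvx (.cons h (.cons hvx'.symm .nil))) ?_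
    · simp at h5
    · rw [Walk.isCycle_def]
      refine ⟨?_, by simp, ?_⟩
      · rw [Walk.isTrail_def]
        simp [Sym2.eq, Sym2.rel_iff', hvx.ne, hvx.ne', h.ne, h.ne', hvx'.ne, hvx'.ne',
          hxx', hxx'.symm]
      · simp [hvx.ne, hvx.ne', h.ne, h.ne', hvx'.ne, hvx'.ne', hxx', hxx'.symm]
  obtain ⟨w₀, hw₀s, hw₀x, hw₀x'⟩ := hqne
  have hq2 : 2 ≤ q.length := by
    by_contra h
    rcases support_of_short q (by omega) w₀ hw₀s with h' | h'
    · exact hw₀x h'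
    · exact hw₀x' h'
  have hqne2 : q.length ≠ 2 := fun h => no_len_two hG v X hX A₂ hA₂ hx hx' q hq.1 hqA h
  have hp0 : p.length ≠ 0 := fun h => hxx' (Walk.eq_of_length_eq_zero h)
  have hpne2 : p.length ≠ 2 := fun h => no_len_two hG v X hX A₁ hA₁ hx hx' p hp.1 hpint h
  have hp4 : 4 ≤ p.length := by obtain ⟨k, hk⟩ := hpeven; omega
  have hpsup : ∀ w ∈ p.support, w = x ∨ w = x' ∨ w ∈ A₁ := by
    intro w hw
    by_cases h1 : w = x
    · exact Or.inl h1
    by_cases h2 : w = x'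
    · exact Or.inr (Or.inl h2)
    exact Or.inr (Or.inr (hpint ⟨hw, h1, h2⟩))
  have hqsup : ∀ w ∈ q.support, w = x ∨ w = x' ∨ w ∈ A₂ := by
    intro w hw
    by_cases h1 : w = x
    · exact Or.inl h1
    by_cases h2 : w = x'
    · exact Or.inr (Or.inl h2)
    exact Or.inr (Or.inr (hqA ⟨hw, h1, h2⟩))
  have hinter : ∀ w, w ∈ p.support → w ∈ q.support → w = x ∨ w = x' := by
    intro w h1 h2
    rcases hpsup w h1 with h | h | h
    · exact Or.inl h
    · exact Or.inr h
    rcases hqsup w h2 with h' | h' | h'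
    · exact Or.inl h'
    · exact Or.inr h'
    exact (comp_disj hA₁ hA₂ hA h h').elim
  have hmix : ∀ a b : V, a ∈ A₁ → b ∈ A₂ → G.Adj a b → False := by
    intro a b h1 h2 hab
    exact comp_disj hA₁ hA₂ hA (hA₁.2.2.2 a h1 b (hA₂.2.1 h2) hab) h2
  have hqeven : Even q.length := by
    by_contra hodd
    rw [Nat.not_even_iff_odd] at hodd
    set c := p.append q.reverse with hc
    have hxq : x ∈ q.support := Walk.start_mem_support q
    have hx'q : x' ∈ q.support := Walk.end_mem_support q
    have hxp : x ∈ p.support := Walk.start_mem_support p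
    have hx'p : x' ∈ p.support := Walk.end_mem_support p
    have htrail : c.IsTrail := by
      rw [Walk.isTrail_def, hc, Walk.edges_append, List.nodup_append]
      refine ⟨hp.1.edges_nodup, hq.1.reverse.edges_nodup, ?_⟩
      intro e he1 e' he2 hee
      subst hee
      induction e using Sym2.ind with
      | _ a b =>
        have he2' : s(a, b) ∈ q.edges := by
          rw [Walk.edges_reverse, List.mem_reverse] at he2; exact he2
        have hap := Walk.fst_mem_support_of_mem_edges p he1
        have hbp := Walk.snd_mem_support_of_mem_edges p he1
        have haq := Walk.fst_mem_support_of_mem_edges q he2'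
        have hbq := Walk.snd_mem_support_of_mem_edges q he2'
        have hab : G.Adj a b := Walk.adj_of_mem_edges p he1
        rcases hinter a hap haq with ha | ha <;> rcases hinter b hbp hbq with hb | hb
        · exact hab.ne (ha.trans hb.symm)
        · exact hnadj (ha ▸ hb ▸ hab)
        · exact hnadj (ha ▸ hb ▸ hab).symm
        · exact hab.ne (ha.trans hb.symm)
    have hps : p.support = x :: p.support.tail := Walk.support_eq_cons p
    have hqs : q.reverse.support = x' :: q.reverse.support.tail := Walk.support_eq_cons _
    have hpn : p.support.Nodup := hp.1.support_nodup
    have hqn : q.reverse.support.Nodup := hq.1.reverse.support_nodup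
    have htail : c.support.tail.Nodup := by
      rw [hc, Walk.support_append, hps, List.cons_append, List.tail_cons, List.nodup_append]
      refine ⟨?_, ?_, ?_⟩
      · rw [hps] at hpn; exact (List.nodup_cons.mp hpn).2
      · rw [hqs] at hqn; exact (List.nodup_cons.mp hqn).2
      · intro w hw1 w' hw2 hww
        subst hww
        have hwp : w ∈ p.support := List.mem_of_mem_tail hw1
        have hwq : w ∈ q.support := by
          have := List.mem_of_mem_tail hw2
          rwa [Walk.support_reverse, List.mem_reverse] at this
        have hwnx : w ≠ x := by
          rintro rfl; rw [hps] at hpn; exact (List.nodup_cons.mp hpn).1 hw1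
        have hwnx' : w ≠ x' := by
          rintro rfl; rw [hqs] at hqn; exact (List.nodup_cons.mp hqn).1 hw2
        rcases hinter w hwp hwq with h | h
        · exact hwnx h
        · exact hwnx' h
    have hlen : c.length = p.length + q.length := by
      rw [hc, Walk.length_append, Walk.length_reverse]
    have hne_nil : c ≠ Walk.nil := by
      intro h
      have := congrArg Walk.length h
      rw [hlen] at this
      simp only [Walk.length_nil] at this
      omega
    have hind : ∀ a ∈ c.support, ∀ b ∈ c.support, G.Adj a b → s(a, b) ∈ c.edges := by
      intro a ha b hb hab
      rw [hc, Walk.mem_support_append_iff] at ha hb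
      rw [hc, Walk.edges_append, List.mem_append]
      have hrw : ∀ w : V, w ∈ q.reverse.support ↔ w ∈ q.support := by
        intro w; rw [Walk.support_reverse, List.mem_reverse]
      rw [hrw a] at ha
      rw [hrw b] at hb
      have hqe : ∀ {a b : V}, s(a, b) ∈ q.edges → s(a, b) ∈ q.reverse.edges := by
        intro a b h; rw [Walk.edges_reverse, List.mem_reverse]; exact h
      have honlyp : ∀ w : V, w ∈ p.support → w ∉ q.support → w ∈ A₁ := by
        intro w hwp hwq
        rcases hpsup w hwp with h | h | h
        · exact absurd (h ▸ hxq) hwq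
        · exact absurd (h ▸ hx'q) hwq
        · exact h
      have honlyq : ∀ w : V, w ∈ q.support → w ∉ p.support → w ∈ A₂ := by
        intro w hwq hwp
        rcases hqsup w hwq with h | h | h
        · exact absurd (h ▸ hxp) hwp
        · exact absurd (h ▸ hx'p) hwp
        · exact h
      by_cases hap : a ∈ p.support <;> by_cases hbp : b ∈ p.support
      · exact Or.inl (hp.2 a hap b hbp hab)
      · have hbq : b ∈ q.support := hb.resolve_left hbp
        by_cases haq : a ∈ q.support
        · exact Or.inr (hqe (hq.2 a haq b hbq hab))
        · exact (hmix a b (honlyp a hap haq) (honlyq b hbq hbp) hab).elim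
      · have haq : a ∈ q.support := ha.resolve_left hap
        by_cases hbq : b ∈ q.support
        · exact Or.inr (hqe (hq.2 a haq b hbq hab))
        · exact (hmix b a (honlyp b hbp hbq) (honlyq a haq hap) hab.symm).elim
      · have haq : a ∈ q.support := ha.resolve_left hap
        have hbq : b ∈ q.support := hb.resolve_left hbp
        exact Or.inr (hqe (hq.2 a haq b hbq hab))
    have hcyc : IsIndCycle G c :=
      ⟨Walk.isCycle_def c |>.mpr ⟨htrail, hne_nil, htail⟩, hind⟩
    have hodd' : Odd c.length := by rw [hlen]; exact hpeven.add_odd hodd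
    have h5 := hG.2 x c hcyc hodd'
    omega
  refine ⟨hqeven, ?_⟩
  obtain ⟨k, hk⟩ := hqeven
  omega
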